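/- Let M be a real symmetric n×n matrix. Indices a and b are strongly cospectral if and only if φ(a) = ±φ(b) for every eigenvector φ of M, where the sign may depend only on the eigenvalue (i.e., for each eigenvalue θ there is ε_θ ∈ {±1} such that every eigenvector φ with eigenvalue θ satisfies φ(a) = ε_θ φ(b)). -/

import Mathlib

open Matrix

/-- For a real symmetric matrix `M` with spectral projections `E θ`, indices `a` and `b`
are strongly cospectral (`E θ e_a = ± E θ e_b` for each eigenvalue `θ`) iff for each
eigenvalue `θ` there is a sign `ε_θ = ±1` such that every eigenvector `φ` of `M` with
eigenvalue `θ` satisfies `φ a = ε_θ · φ b`. -/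
theorem stronglyCospectral_iff_eigenvector_condition {n : ℕ}
    (M : Matrix (Fin n) (Fin n) ℝ) (hM : M.IsSymm)
    (Θ : Finset ℝ) (E : ℝ → Matrix (Fin n) (Fin n) ℝ)
    (hdecomp : M = ∑ θ ∈ Θ, θ • E θ)
    (hsum : ∑ θ ∈ Θ, E θ = 1)
    (hsymm : ∀ θ ∈ Θ, (E θ).IsSymm)
    (hidem : ∀ θ ∈ Θ, E θ * E θ = E θ)
    (horth : ∀ θ ∈ Θ, ∀ η ∈ Θ, θ ≠ η → E θ * E η = 0)
    (a b : Fin n) :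
    (∀ θ ∈ Θ, ∃ ε : ℝ, (ε = 1 ∨ ε = -1) ∧
        E θ *ᵥ Pi.single a 1 = ε • (E θ *ᵥ Pi.single b 1)) ↔
      (∀ θ ∈ Θ, ∃ ε : ℝ, (ε = 1 ∨ ε = -1) ∧
        ∀ φ : Fin n → ℝ, M *ᵥ φ = θ • φ → φ a = ε * φ b) := by
  -- key: M * E θ = θ • E θ and E θ * M = θ • E θ
  have hME : ∀ θ ∈ Θ, M * E θ = θ • E θ := by
    intro θ hθ
    calc M * E θ = ∑ η ∈ Θ, (η • E η) * E θ := by rw [hdecomp, Finset.sum_mul]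
    _ = ∑ η ∈ Θ, η • (E η * E θ) := by simp [Matrix.smul_mul]
    _ = θ • (E θ * E θ) := by
        refine Finset.sum_eq_single θ ?_ (fun h => absurd hθ h) |>.trans rfl
        intro η hη hne
        rw [horth η hη θ hθ hne, smul_zero]
    _ = θ • E θ := by rw [hidem θ hθ]
  have hEM : ∀ θ ∈ Θ, E θ * M = θ • E θ := by
    intro θ hθ
    calc E θ * M = ∑ η ∈ Θ, E θ * (η • E η) := by rw [hdecomp, Finset.mul_sum]
    _ = ∑ η ∈ Θ, η • (E θ * E η) := by simp [Matrix.mul_smul]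
    _ = θ • (E θ * E θ) := by
        refine Finset.sum_eq_single θ ?_ (fun h => absurd hθ h) |>.trans rfl
        intro η hη hne
        rw [horth θ hθ η hη (Ne.symm hne), smul_zero]
    _ = θ • E θ := by rw [hidem θ hθ]
  constructor
  · intro h θ hθ
    obtain ⟨ε, hε, heq⟩ := h θ hθ
    refine ⟨ε, hε, ?_⟩
    intro φ hφ
    -- row relation: E θ a j = ε * E θ b j
    have hrow : ∀ j, E θ a j = ε * E θ b j := by
      intro j
      have ha := congrFun heq j
      simp only [mulVec_single_one, col_apply, mul_one, Pi.smul_apply, smul_eq_mul] at ha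
      rw [(hsymm θ hθ).apply, ha, (hsymm θ hθ).apply]
    -- φ = E θ *ᵥ φ
    have hproj : E θ *ᵥ φ = φ := by
      have hzero : ∀ η ∈ Θ, η ≠ θ → E η *ᵥ φ = 0 := by
        intro η hη hne
        have h1 : E η *ᵥ (M *ᵥ φ) = η • (E η *ᵥ φ) := by
          rw [mulVec_mulVec, hEM η hη, smul_mulVec]
        rw [hφ, mulVec_smul] at h1
        have h2 : (η - θ) • (E η *ᵥ φ) = 0 := by
          rw [sub_smul, h1, sub_self]
        have := smul_eq_zero.mp h2
        rcases this with h | h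
        · exact absurd (sub_eq_zero.mp h) hne
        · exact h
      have : (∑ η ∈ Θ, E η) *ᵥ φ = φ := by rw [hsum, one_mulVec]
      rw [show (∑ η ∈ Θ, E η) *ᵥ φ = ∑ η ∈ Θ, E η *ᵥ φ from
        map_sum (AddMonoidHom.mk' (fun A : Matrix (Fin n) (Fin n) ℝ => A *ᵥ φ)
          (fun A B => add_mulVec A B φ)) E Θ] at this
      rw [Finset.sum_eq_single θ (fun η hη hne => hzero η hη hne)
        (fun h => absurd hθ h)] at this
      exact this
    calc φ a = (E θ *ᵥ φ) a := by rw [hproj]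
    _ = ∑ j, E θ a j * φ j := by simp [mulVec, dotProduct]
    _ = ε * ∑ j, E θ b j * φ j := by
        rw [Finset.mul_sum]; exact Finset.sum_congr rfl fun j _ => by rw [hrow j, mul_assoc]
    _ = ε * (E θ *ᵥ φ) b := by simp [mulVec, dotProduct]
    _ = ε * φ b := by rw [hproj]
  · intro h θ hθ
    obtain ⟨ε, hε, hvec⟩ := h θ hθ
    refine ⟨ε, hε, ?_⟩
    funext i
    have hcol : M *ᵥ (E θ *ᵥ Pi.single i 1) = θ • (E θ *ᵥ Pi.single i 1) := by
      rw [mulVec_mulVec, hME θ hθ, smul_mulVec]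
    have := hvec _ hcol
    simp only [mulVec_single_one, col_apply, mul_one] at this
    simp only [mulVec_single_one, col_apply, mul_one, Pi.smul_apply, smul_eq_mul]
    rw [(hsymm θ hθ).apply, this, (hsymm θ hθ).apply]
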